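/- Let A be an m×m complex matrix that is asymptotically stable and let Q be an m×m Hermitian complex matrix that is positive definite. Then the solution P(Q,A) = ∫₀^∞ exp(tA) Q exp(tA†) dt of the Lyapunov equation A·P + P·A† + Q = 0 is positive definite. -/

import Mathlib

open MeasureTheory NormedSpace Matrix
open scoped ComplexOrder

attribute [local instance] Matrix.normedAddCommGroup Matrix.normedSpace

/-- A square complex matrix is asymptotically stable if every eigenvalue has
strictly negative real part. -/
def IsAsymptoticallyStable {m : ℕ} (A : Matrix (Fin m) (Fin m) ℂ) : Prop :=
  ∀ μ ∈ spectrum ℂ A, μ.re < 0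

/-- The integral solution `P(Q,A) = ∫₀^∞ exp(tA) Q exp(tA)ᴴ dt` of the Lyapunov
equation `A P + P Aᴴ + Q = 0`. -/
noncomputable def lyapunovSolution {m : ℕ} (Q A : Matrix (Fin m) (Fin m) ℂ) :
    Matrix (Fin m) (Fin m) ℂ :=
  ∫ t in Set.Ici (0 : ℝ), exp (t • A) * Q * (exp (t • A))ᴴ

namespace LyapAux

variable {m : ℕ}

lemma exp_smul_one (z : ℂ) :
    exp (z • (1 : Matrix (Fin m) (Fin m) ℂ)) = Complex.exp z • 1 := by
  have h : exp (fun _ : Fin m => z) = fun _ : Fin m => Complex.exp z := by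
    rw [Pi.exp_def]
    funext i
    rw [Complex.exp_eq_exp_ℂ]
  rw [Matrix.smul_one_eq_diagonal, Matrix.exp_diagonal, h, Matrix.smul_one_eq_diagonal]

lemma exp_mulVec_eq (A : Matrix (Fin m) (Fin m) ℂ) (μ c : ℂ) (n : ℕ)
    (v : Fin m → ℂ) (hv : (A - μ • 1) ^ n *ᵥ v = 0) :
    exp (c • A) *ᵥ v = Complex.exp (c * μ) •
      ∑ k ∈ Finset.range n, ((c ^ k * ((k.factorial : ℂ))⁻¹)) •
        ((A - μ • 1) ^ k *ᵥ v) := by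
  set N := A - μ • 1 with hN
  have hsplit : c • A = c • N + (c * μ) • (1 : Matrix (Fin m) (Fin m) ℂ) := by
    rw [hN, smul_sub, smul_smul]; abel
  have hcomm : Commute (c • N) ((c * μ) • (1 : Matrix (Fin m) (Fin m) ℂ)) :=
    ((Commute.one_right (c • N)).smul_right (c * μ))
  rw [hsplit, Matrix.exp_add_of_commute _ _ hcomm, exp_smul_one, mul_smul_comm, mul_one,
    smul_mulVec]
  congr 1
  -- now work with the linfty op norm instances
  letI : SeminormedRing (Matrix (Fin m) (Fin m) ℂ) := Matrix.linftyOpSemiNormedRing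
  letI : NormedRing (Matrix (Fin m) (Fin m) ℂ) := Matrix.linftyOpNormedRing
  letI : NormedAlgebra ℂ (Matrix (Fin m) (Fin m) ℂ) := Matrix.linftyOpNormedAlgebra
  haveI : @CompleteSpace (Matrix (Fin m) (Fin m) ℂ) PseudoMetricSpace.toUniformSpace :=
    (Matrix.instCompleteSpace (Fin m) (Fin m) ℂ : CompleteSpace (Matrix (Fin m) (Fin m) ℂ))
  have key : exp (c • N) *ᵥ v
      = ∑ k ∈ Finset.range n, (c ^ k * ((k.factorial : ℂ))⁻¹) • (N ^ k *ᵥ v) := by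
    let L : Matrix (Fin m) (Fin m) ℂ →L[ℂ] (Fin m → ℂ) :=
      LinearMap.toContinuousLinearMap
        { toFun := fun M => M *ᵥ v
          map_add' := fun M N => Matrix.add_mulVec M N v
          map_smul' := fun c M => Matrix.smul_mulVec c M v }
    have hL : ∀ M, L M = M *ᵥ v := fun _ => rfl
    have hsum : Summable fun k : ℕ => ((k.factorial : ℂ))⁻¹ • (c • N) ^ k :=
      expSeries_summable' (𝕂 := ℂ) (c • N)
    have h1 : exp (c • N) *ᵥ v
        = ∑' k : ℕ, ((k.factorial : ℂ))⁻¹ • ((c • N) ^ k *ᵥ v) := by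
      rw [exp_eq_tsum ℂ, ← hL, L.map_tsum hsum]
      exact tsum_congr fun k => by rw [_root_.map_smul, hL]
    rw [h1]
    have hterm : ∀ k : ℕ, ((k.factorial : ℂ))⁻¹ • ((c • N) ^ k *ᵥ v)
        = (c ^ k * ((k.factorial : ℂ))⁻¹) • (N ^ k *ᵥ v) := by
      intro k
      rw [smul_pow, smul_mulVec, smul_smul, mul_comm]
    simp_rw [hterm]
    refine tsum_eq_sum ?_
    intro k hk
    have hkn : n ≤ k := le_of_not_gt fun h => hk (Finset.mem_range.mpr h)
    have hz : N ^ k *ᵥ v = 0 := by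
      have h2 : N ^ k = N ^ (k - n) * N ^ n := by rw [← pow_add]; congr 1; omega
      rw [h2, ← Matrix.mulVec_mulVec, hv, Matrix.mulVec_zero]
    rw [hz, smul_zero]
  exact key

lemma spectrum_nonempty (hm : 0 < m) (A : Matrix (Fin m) (Fin m) ℂ) :
    (spectrum ℂ A).Nonempty := by
  letI : SeminormedRing (Matrix (Fin m) (Fin m) ℂ) := Matrix.linftyOpSemiNormedRing
  letI : NormedRing (Matrix (Fin m) (Fin m) ℂ) := Matrix.linftyOpNormedRing
  letI : NormedAlgebra ℂ (Matrix (Fin m) (Fin m) ℂ) := Matrix.linftyOpNormedAlgebra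
  haveI : @CompleteSpace (Matrix (Fin m) (Fin m) ℂ) PseudoMetricSpace.toUniformSpace :=
    (Matrix.instCompleteSpace (Fin m) (Fin m) ℂ : CompleteSpace (Matrix (Fin m) (Fin m) ℂ))
  haveI : Nonempty (Fin m) := ⟨⟨0, hm⟩⟩
  exact spectrum.nonempty A

section withNorm

lemma decay_vec (A : Matrix (Fin m) (Fin m) ℂ) {ε : ℝ} (hε : 0 < ε) (μ : ℂ)
    (hμ : μ.re ≤ -(2 * ε)) (n : ℕ) (v : Fin m → ℂ) (hv : (A - μ • 1) ^ n *ᵥ v = 0) :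
    ∃ C : ℝ, ∀ t : ℝ, 0 ≤ t → ‖exp ((t : ℂ) • A) *ᵥ v‖ ≤ C * Real.exp (-(ε * t)) := by
  classical
  set w : ℕ → (Fin m → ℂ) := fun k => (A - μ • 1) ^ k *ᵥ v with hw
  refine ⟨∑ k ∈ Finset.range n, ε⁻¹ ^ k * ‖w k‖, fun t ht => ?_⟩
  have hC0 : (0:ℝ) ≤ ∑ k ∈ Finset.range n, ε⁻¹ ^ k * ‖w k‖ :=
    Finset.sum_nonneg fun k _ => by positivity
  rw [exp_mulVec_eq A μ t n v hv, norm_smul]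
  have h1 : ‖Complex.exp ((t : ℂ) * μ)‖ = Real.exp (t * μ.re) := by
    rw [Complex.norm_exp]
    congr 1
    simp [Complex.mul_re]
  have h2 : ‖∑ k ∈ Finset.range n, ((t:ℂ) ^ k * ((k.factorial : ℂ))⁻¹) • w k‖
      ≤ ∑ k ∈ Finset.range n, (ε⁻¹ ^ k * ‖w k‖) * Real.exp (ε * t) := by
    refine (norm_sum_le _ _).trans (Finset.sum_le_sum fun k _ => ?_)
    rw [norm_smul]
    have h3 : ‖(t:ℂ) ^ k * ((k.factorial : ℂ))⁻¹‖ = t ^ k / k.factorial := by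
      rw [norm_mul, norm_pow, norm_inv, Complex.norm_real, Real.norm_of_nonneg ht,
        Complex.norm_natCast, div_eq_mul_inv]
    rw [h3]
    have h4 : t ^ k / k.factorial ≤ ε⁻¹ ^ k * Real.exp (ε * t) := by
      have h5 : (ε * t) ^ k / k.factorial ≤ Real.exp (ε * t) :=
        Real.pow_div_factorial_le_exp _ (by positivity) k
      have h6 : t ^ k / k.factorial = ε⁻¹ ^ k * ((ε * t) ^ k / k.factorial) := by
        rw [mul_pow]
        rw [mul_div_assoc, ← mul_assoc, ← mul_pow, inv_mul_cancel₀ hε.ne', one_pow, one_mul]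
      rw [h6]
      exact mul_le_mul_of_nonneg_left h5 (by positivity)
    calc t ^ k / ↑k.factorial * ‖w k‖ ≤ (ε⁻¹ ^ k * Real.exp (ε * t)) * ‖w k‖ :=
          mul_le_mul_of_nonneg_right h4 (norm_nonneg _)
      _ = (ε⁻¹ ^ k * ‖w k‖) * Real.exp (ε * t) := by ring
  rw [h1]
  calc Real.exp (t * μ.re) * ‖∑ k ∈ Finset.range n, ((t:ℂ) ^ k * ((k.factorial : ℂ))⁻¹) • w k‖
      ≤ Real.exp (t * μ.re) * (∑ k ∈ Finset.range n, (ε⁻¹ ^ k * ‖w k‖) * Real.exp (ε * t)) :=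
        mul_le_mul_of_nonneg_left h2 (Real.exp_nonneg _)
    _ = (∑ k ∈ Finset.range n, ε⁻¹ ^ k * ‖w k‖) * Real.exp (t * μ.re + ε * t) := by
        rw [← Finset.sum_mul, Real.exp_add]; ring
    _ ≤ (∑ k ∈ Finset.range n, ε⁻¹ ^ k * ‖w k‖) * Real.exp (-(ε * t)) := by
        refine mul_le_mul_of_nonneg_left (Real.exp_le_exp.mpr ?_) hC0
        nlinarith [mul_le_mul_of_nonneg_left hμ ht]

theorem exp_decay (A : Matrix (Fin m) (Fin m) ℂ) (hA : ∀ μ ∈ spectrum ℂ A, μ.re < 0) :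
    ∃ ε : ℝ, 0 < ε ∧ ∃ C : ℝ, 0 ≤ C ∧ ∀ t : ℝ, 0 ≤ t →
      ‖exp ((t : ℂ) • A)‖ ≤ C * Real.exp (-(ε * t)) := by
  classical
  rcases Nat.eq_zero_or_pos m with hm | hm
  · subst hm
    haveI : Subsingleton (Matrix (Fin 0) (Fin 0) ℂ) := by
      unfold Matrix; infer_instance
    refine ⟨1, one_pos, 0, le_refl _, fun t ht => ?_⟩
    rw [Subsingleton.elim (exp ((t : ℂ) • A)) 0, norm_zero, zero_mul]
  -- choose ε
  have hfin : (spectrum ℂ A).Finite := A.finite_spectrum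
  have hne : (spectrum ℂ A).Nonempty := spectrum_nonempty hm A
  set s : Finset ℂ := hfin.toFinset with hs
  have hsne : s.Nonempty := by
    rwa [hs, Set.Finite.toFinset_nonempty]
  have hsim : (s.image Complex.re).Nonempty := hsne.image _
  set r : ℝ := (s.image Complex.re).max' hsim with hr
  have hr_neg : r < 0 := by
    obtain ⟨μ, hμs, hμr⟩ := Finset.mem_image.mp ((s.image Complex.re).max'_mem hsim)
    rw [hr, ← hμr]
    exact hA μ (by rwa [hs, Set.Finite.mem_toFinset] at hμs)
  set ε : ℝ := -r / 2 with hε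
  have hε_pos : 0 < ε := by rw [hε]; linarith
  have hspec : ∀ μ ∈ spectrum ℂ A, μ.re ≤ -(2 * ε) := by
    intro μ hμ
    have : μ.re ≤ r := Finset.le_max' _ _ (Finset.mem_image_of_mem _
      (by rwa [hs, Set.Finite.mem_toFinset]))
    rw [hε]; linarith
  -- the set of vectors with exponential decay is a submodule
  set f : Module.End ℂ (Fin m → ℂ) := Matrix.toLinAlgEquiv' A with hf
  let V : Submodule ℂ (Fin m → ℂ) :=
    { carrier := {v | ∃ C : ℝ, ∀ t : ℝ, 0 ≤ t →
        ‖exp ((t : ℂ) • A) *ᵥ v‖ ≤ C * Real.exp (-(ε * t))}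
      add_mem' := by
        rintro u v ⟨C₁, hC₁⟩ ⟨C₂, hC₂⟩
        refine ⟨C₁ + C₂, fun t ht => ?_⟩
        rw [Matrix.mulVec_add, add_mul]
        exact (norm_add_le _ _).trans (add_le_add (hC₁ t ht) (hC₂ t ht))
      zero_mem' := ⟨0, fun t ht => by simp [Matrix.mulVec_zero]⟩
      smul_mem' := by
        rintro c v ⟨C, hC⟩
        refine ⟨‖c‖ * C, fun t ht => ?_⟩
        rw [Matrix.mulVec_smul, norm_smul, mul_assoc]
        exact mul_le_mul_of_nonneg_left (hC t ht) (norm_nonneg _) }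
  have hVtop : ∀ v : Fin m → ℂ, v ∈ V := by
    have hle : ∀ μ : ℂ, f.maxGenEigenspace μ ≤ V := by
      intro μ v hv
      by_cases hv0 : v = 0
      · rw [hv0]; exact V.zero_mem
      obtain ⟨k, hk⟩ := (Module.End.mem_maxGenEigenspace f μ v).mp hv
      have hμs : μ ∈ spectrum ℂ A := by
        have hgen : f.HasGenEigenvalue μ k := by
          rw [Module.End.hasGenEigenvalue_iff]
          refine Submodule.ne_bot_iff _ |>.mpr ⟨v, ?_, hv0⟩
          rw [Module.End.genEigenspace_nat, LinearMap.mem_ker]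
          exact hk
        have heig : f.HasEigenvalue μ := Module.End.hasEigenvalue_of_hasGenEigenvalue hgen
        have : μ ∈ spectrum ℂ f := Module.End.hasEigenvalue_iff_mem_spectrum.mp heig
        rwa [hf, AlgEquiv.spectrum_eq (Matrix.toLinAlgEquiv') A] at this
      have hmat : (A - μ • 1) ^ k *ᵥ v = 0 := by
        have h1 : Matrix.toLinAlgEquiv' ((A - μ • 1) ^ k) = (f - μ • 1) ^ k := by
          rw [map_pow, map_sub, _root_.map_smul, _root_.map_one]
        calc (A - μ • 1) ^ k *ᵥ v = (Matrix.toLinAlgEquiv' ((A - μ • 1) ^ k)) v :=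
              (Matrix.toLinAlgEquiv'_apply _ _).symm
          _ = ((f - μ • 1) ^ k) v := by rw [h1]
          _ = 0 := hk
      exact decay_vec A hε_pos μ (hspec μ hμs) k v hmat
    intro v
    have htop := Module.End.iSup_maxGenEigenspace_eq_top (K := ℂ) f
    have : v ∈ (⨆ μ : ℂ, f.maxGenEigenspace μ) := htop ▸ Submodule.mem_top
    exact (iSup_le hle) this
  -- assemble the matrix bound
  choose Cv hCv using hVtop
  refine ⟨ε, hε_pos, ∑ j : Fin m, max (Cv (Pi.single j 1)) 0,
    Finset.sum_nonneg fun j _ => le_max_right _ _, fun t ht => ?_⟩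
  rw [Matrix.norm_le_iff (by positivity)]
  intro i j
  have h1 : exp ((t : ℂ) • A) i j = (exp ((t : ℂ) • A) *ᵥ Pi.single j 1) i := by
    simp [Matrix.mulVec_single]
  rw [h1]
  calc ‖(exp ((t : ℂ) • A) *ᵥ Pi.single j 1) i‖
      ≤ ‖exp ((t : ℂ) • A) *ᵥ Pi.single j 1‖ := norm_le_pi_norm _ i
    _ ≤ Cv (Pi.single j 1) * Real.exp (-(ε * t)) := hCv (Pi.single j 1) t ht
    _ ≤ max (Cv (Pi.single j 1)) 0 * Real.exp (-(ε * t)) :=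
        mul_le_mul_of_nonneg_right (le_max_left _ _) (Real.exp_nonneg _)
    _ ≤ (∑ j : Fin m, max (Cv (Pi.single j 1)) 0) * Real.exp (-(ε * t)) := by
        refine mul_le_mul_of_nonneg_right ?_ (Real.exp_nonneg _)
        exact Finset.single_le_sum (f := fun j => max (Cv (Pi.single j 1)) 0)
          (fun j _ => le_max_right _ _) (Finset.mem_univ j)


lemma norm_mul_le_card (A B : Matrix (Fin m) (Fin m) ℂ) :
    ‖A * B‖ ≤ m * ‖A‖ * ‖B‖ := by
  rw [Matrix.norm_le_iff (by positivity)]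
  intro i j
  rw [Matrix.mul_apply]
  calc ‖∑ k, A i k * B k j‖ ≤ ∑ k, ‖A i k * B k j‖ := norm_sum_le _ _
    _ ≤ ∑ _k : Fin m, ‖A‖ * ‖B‖ := Finset.sum_le_sum fun k _ => by
        rw [norm_mul]
        exact mul_le_mul (Matrix.norm_entry_le_entrywise_sup_norm A)
          (Matrix.norm_entry_le_entrywise_sup_norm B) (norm_nonneg _) (norm_nonneg _)
    _ = m * ‖A‖ * ‖B‖ := by
        rw [Finset.sum_const, Finset.card_univ, Fintype.card_fin, nsmul_eq_mul, mul_assoc]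

lemma continuous_exp_smul (A : Matrix (Fin m) (Fin m) ℂ) :
    Continuous fun t : ℝ => exp (t • A) := by
  letI : SeminormedRing (Matrix (Fin m) (Fin m) ℂ) := Matrix.linftyOpSemiNormedRing
  letI : NormedRing (Matrix (Fin m) (Fin m) ℂ) := Matrix.linftyOpNormedRing
  letI : NormedAlgebra ℂ (Matrix (Fin m) (Fin m) ℂ) := Matrix.linftyOpNormedAlgebra
  haveI : @CompleteSpace (Matrix (Fin m) (Fin m) ℂ) PseudoMetricSpace.toUniformSpace :=
    (Matrix.instCompleteSpace (Fin m) (Fin m) ℂ : CompleteSpace (Matrix (Fin m) (Fin m) ℂ))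
  letI : NormedAlgebra ℚ (Matrix (Fin m) (Fin m) ℂ) := .restrictScalars ℚ ℂ _
  exact NormedSpace.exp_continuous.comp (continuous_id.smul continuous_const)

lemma real_smul_eq (t : ℝ) (A : Matrix (Fin m) (Fin m) ℂ) :
    t • A = (t : ℂ) • A := by
  ext i j
  simp [Matrix.smul_apply, Complex.real_smul]

noncomputable def entryCLM (i j : Fin m) : Matrix (Fin m) (Fin m) ℂ →L[ℂ] ℂ :=
  LinearMap.toContinuousLinearMap
    { toFun := fun M => M i j
      map_add' := fun _ _ => rfl
      map_smul' := fun _ _ => rfl }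

@[simp] lemma entryCLM_apply (i j : Fin m) (M : Matrix (Fin m) (Fin m) ℂ) :
    entryCLM i j M = M i j := rfl

noncomputable def quadCLM (x : Fin m → ℂ) : Matrix (Fin m) (Fin m) ℂ →L[ℂ] ℂ :=
  LinearMap.toContinuousLinearMap
    { toFun := fun M => star x ⬝ᵥ (M *ᵥ x)
      map_add' := fun M N => by simp [Matrix.add_mulVec, dotProduct_add]
      map_smul' := fun c M => by simp [Matrix.smul_mulVec, dotProduct_smul] }

@[simp] lemma quadCLM_apply (x : Fin m → ℂ) (M : Matrix (Fin m) (Fin m) ℂ) :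
    quadCLM x M = star x ⬝ᵥ (M *ᵥ x) := rfl

end withNorm

end LyapAux

noncomputable abbrev LyapAux.matTop {m : ℕ} : TopologicalSpace (Matrix (Fin m) (Fin m) ℂ) :=
  @UniformSpace.toTopologicalSpace _ (@PseudoMetricSpace.toUniformSpace _
    (Matrix.normedAddCommGroup).toPseudoMetricSpace)

/-- If `A` is asymptotically stable and `Q` is Hermitian positive definite, then the
integral solution of the Lyapunov equation `A P + P Aᴴ + Q = 0` is positive definite. -/
theorem lyapunovSolution_posDef {m : ℕ} (A Q : Matrix (Fin m) (Fin m) ℂ)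
    (hA : IsAsymptoticallyStable A) (hQ : Q.IsHermitian) (hQ' : Q.PosDef) :
    (lyapunovSolution Q A).PosDef := by
  classical
  obtain ⟨ε, hε, C, hC0, hC⟩ := LyapAux.exp_decay A hA
  set g : ℝ → Matrix (Fin m) (Fin m) ℂ :=
    fun t => exp (t • A) * Q * (exp (t • A))ᴴ with hg
  have hgdef : ∀ t : ℝ, g t = exp (t • A) * Q * (exp (t • A))ᴴ := fun _ => rfl
  have hexp_cont : Continuous fun t : ℝ => exp (t • A) := LyapAux.continuous_exp_smul A
  have hg_cont : Continuous g :=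
    (hexp_cont.matrix_mul continuous_const).matrix_mul hexp_cont.matrix_conjTranspose
  have hexp_bound : ∀ t : ℝ, 0 ≤ t → ‖exp (t • A)‖ ≤ C * Real.exp (-(ε * t)) := by
    intro t ht
    rw [LyapAux.real_smul_eq]
    exact hC t ht
  have hgb : ∀ t : ℝ, 0 ≤ t →
      ‖g t‖ ≤ (m * m * ‖Q‖ * C * C) * Real.exp (-(2 * ε) * t) := by
    intro t ht
    have hE := hexp_bound t ht
    have hE0 : (0:ℝ) ≤ ‖exp (t • A)‖ := norm_nonneg _
    have h1 : ‖g t‖ ≤ m * (m * ‖exp (t • A)‖ * ‖Q‖) * ‖exp (t • A)‖ := by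
      rw [hgdef t]
      calc ‖exp (t • A) * Q * (exp (t • A))ᴴ‖
          ≤ m * ‖exp (t • A) * Q‖ * ‖(exp (t • A))ᴴ‖ := LyapAux.norm_mul_le_card _ _
        _ ≤ m * (m * ‖exp (t • A)‖ * ‖Q‖) * ‖(exp (t • A))ᴴ‖ := by
            refine mul_le_mul_of_nonneg_right (mul_le_mul_of_nonneg_left ?_ (by positivity))
              (norm_nonneg _)
            exact LyapAux.norm_mul_le_card _ _
        _ = m * (m * ‖exp (t • A)‖ * ‖Q‖) * ‖exp (t • A)‖ := by
            rw [Matrix.norm_conjTranspose]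
    have h2 : Real.exp (-(2 * ε) * t) = Real.exp (-(ε * t)) * Real.exp (-(ε * t)) := by
      rw [← Real.exp_add]; ring_nf
    rw [h2]
    have key : ‖exp (t • A)‖ * ‖exp (t • A)‖
        ≤ (C * Real.exp (-(ε * t))) * (C * Real.exp (-(ε * t))) :=
      mul_le_mul hE hE hE0 (by positivity)
    calc ‖g t‖ ≤ m * (m * ‖exp (t • A)‖ * ‖Q‖) * ‖exp (t • A)‖ := h1
      _ = (m * m * ‖Q‖) * (‖exp (t • A)‖ * ‖exp (t • A)‖) := by ring
      _ ≤ (m * m * ‖Q‖) * ((C * Real.exp (-(ε * t))) * (C * Real.exp (-(ε * t)))) :=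
          mul_le_mul_of_nonneg_left key (by positivity)
      _ = m * m * ‖Q‖ * C * C * (Real.exp (-(ε * t)) * Real.exp (-(ε * t))) := by ring
  letI : TopologicalSpace (Matrix (Fin m) (Fin m) ℂ) := LyapAux.matTop
  have hInt : IntegrableOn g (Set.Ici (0:ℝ)) := by
    have hb : IntegrableOn (fun t => (m * m * ‖Q‖ * C * C) * Real.exp (-(2 * ε) * t))
        (Set.Ici (0:ℝ)) := by
      have hexpint : IntegrableOn (fun t => Real.exp (-(2 * ε) * t)) (Set.Ici (0:ℝ)) := by
        rw [integrableOn_Ici_iff_integrableOn_Ioi]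
        exact exp_neg_integrableOn_Ioi 0 (by positivity)
      exact hexpint.const_mul _
    refine Integrable.mono' hb (show Continuous g from hg_cont).aestronglyMeasurable ?_
    refine (ae_restrict_iff' measurableSet_Ici).mpr (Filter.Eventually.of_forall ?_)
    exact fun t ht => hgb t ht
  unfold this at hInt
  clear this
  have hP : lyapunovSolution Q A = ∫ t in Set.Ici (0:ℝ), g t := rfl
  have hPij : ∀ i j : Fin m, (∫ t in Set.Ici (0:ℝ), g t) i j
      = ∫ t in Set.Ici (0:ℝ), (g t) i j :=
    fun i j => (ContinuousLinearMap.integral_comp_comm (LyapAux.entryCLM i j) hInt).symm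
  rw [Matrix.posDef_iff_dotProduct_mulVec]
  constructor
  · show (lyapunovSolution Q A)ᴴ = lyapunovSolution Q A
    have hgH : ∀ t : ℝ, (g t)ᴴ = g t := by
      intro t
      rw [hgdef t, Matrix.conjTranspose_mul, Matrix.conjTranspose_mul,
        Matrix.conjTranspose_conjTranspose, hQ.eq, Matrix.mul_assoc]
    ext i j
    rw [hP, Matrix.conjTranspose_apply, hPij j i, hPij i j, RCLike.star_def, ← integral_conj]
    refine integral_congr_ae (Filter.Eventually.of_forall fun t => ?_)
    calc (starRingEnd ℂ) ((g t) j i) = ((g t)ᴴ) i j := by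
          rw [Matrix.conjTranspose_apply]; rfl
      _ = (g t) i j := by rw [hgH t]
  · intro x hx
    have hy : ∀ t : ℝ, (exp (t • A))ᴴ *ᵥ x ≠ 0 := by
      intro t h0
      have hunit : IsUnit ((exp (t • A))ᴴ) := by
        rw [← Matrix.exp_conjTranspose]
        exact Matrix.isUnit_exp _
      have hinj := Matrix.mulVec_injective_iff_isUnit.mpr hunit
      exact hx (hinj (by rw [h0, Matrix.mulVec_zero]))
    have hφ : ∀ t : ℝ, star x ⬝ᵥ (g t *ᵥ x)
        = star ((exp (t • A))ᴴ *ᵥ x) ⬝ᵥ (Q *ᵥ ((exp (t • A))ᴴ *ᵥ x)) := by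
      intro t
      rw [hgdef t, Matrix.star_mulVec, Matrix.conjTranspose_conjTranspose,
        ← Matrix.mulVec_mulVec, ← Matrix.mulVec_mulVec, Matrix.dotProduct_mulVec]
    have hpos : ∀ t : ℝ, 0 < star x ⬝ᵥ (g t *ᵥ x) := by
      intro t
      rw [hφ t]
      exact (Matrix.posDef_iff_dotProduct_mulVec.mp hQ').2 (hy t)
    have hφint : IntegrableOn (fun t => star x ⬝ᵥ (g t *ᵥ x)) (Set.Ici (0:ℝ)) :=
      (LyapAux.quadCLM x).integrable_comp hInt
    have hquad : star x ⬝ᵥ (lyapunovSolution Q A *ᵥ x)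
        = ∫ t in Set.Ici (0:ℝ), star x ⬝ᵥ (g t *ᵥ x) := by
      rw [hP]
      exact (ContinuousLinearMap.integral_comp_comm (LyapAux.quadCLM x) hInt).symm
    rw [hquad]
    have hψpos : ∀ t : ℝ, 0 < (star x ⬝ᵥ (g t *ᵥ x)).re := by
      intro t
      have h := hpos t
      rw [Complex.lt_def] at h
      simpa using h.1
    have hψim : ∀ t : ℝ, (star x ⬝ᵥ (g t *ᵥ x)).im = 0 := by
      intro t
      have h := hpos t
      rw [Complex.lt_def] at h
      simpa using h.2.symm
    have hψint : IntegrableOn (fun t => (star x ⬝ᵥ (g t *ᵥ x)).re) (Set.Ici (0:ℝ)) := by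
      have := hφint.re
      simpa [RCLike.re_to_complex, IntegrableOn] using this
    have hψposInt : 0 < ∫ t in Set.Ici (0:ℝ), (star x ⬝ᵥ (g t *ᵥ x)).re := by
      rw [setIntegral_pos_iff_support_of_nonneg_ae
        (Filter.Eventually.of_forall fun t => (hψpos t).le) hψint]
      have hsup : Function.support (fun t => (star x ⬝ᵥ (g t *ᵥ x)).re) ∩ Set.Ici (0:ℝ)
          = Set.Ici (0:ℝ) :=
        Set.inter_eq_self_of_subset_right fun t _ => (hψpos t).ne'
      rw [hsup, Real.volume_Ici]
      simp
    rw [Complex.lt_def]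
    constructor
    · rw [Complex.zero_re]
      have hre := integral_re hφint
      simp only [RCLike.re_to_complex] at hre
      rw [← hre]
      exact hψposInt
    · rw [Complex.zero_im]
      have him2 := integral_im hφint
      simp only [RCLike.im_to_complex] at him2
      rw [← him2]
      simp [hψim]
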